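/- Let k be a field and u, v ∈ k. If (X₀, X₁, X₂, X₃) ∈ k⁴ satisfies the equations of Q₂ (namely X₃² + X₁X₃ = (X₀ + 4vX₂)(X₁ + uX₂) + vX₂² and X₁² = X₀X₂), then the quadruple φ(X₀,X₁,X₂,X₃) = ((X₀ + 4vX₂)², (X₁ + 2X₃)², (4X₁ + (4u+1)X₂)², f₃), where f₃ = uX₁² − 8vX₁X₂ − (4u+1)vX₂² + 2X₀X₃ + 4uX₁X₃ − 8vX₂X₃ − X₃², satisfies the equations of Q₁ (namely X₃² + X₁X₃ = (X₀ + uX₁ − vX₂)X₁ and X₁² = X₀X₂). -/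
import Mathlib

/-- The dual 2-isogeny `φ` maps points of `Q₂` to points of `Q₁`. -/
theorem phi_maps_Q2_to_Q1 {k : Type*} [Field k] (u v : k)
    (X₀ X₁ X₂ X₃ : k)
    (h1 : X₃ ^ 2 + X₁ * X₃ =
      (X₀ + 4 * v * X₂) * (X₁ + u * X₂) + v * X₂ ^ 2)
    (h2 : X₁ ^ 2 = X₀ * X₂) :
    (let Y₀ := (X₀ + 4 * v * X₂) ^ 2
     let Y₁ := (X₁ + 2 * X₃) ^ 2
     let Y₂ := (4 * X₁ + (4 * u + 1) * X₂) ^ 2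
     let Y₃ := u * X₁ ^ 2 - 8 * v * X₁ * X₂ - (4 * u + 1) * v * X₂ ^ 2 +
       2 * X₀ * X₃ + 4 * u * X₁ * X₃ - 8 * v * X₂ * X₃ - X₃ ^ 2
     Y₃ ^ 2 + Y₁ * Y₃ = (Y₀ + u * Y₁ - v * Y₂) * Y₁ ∧
       Y₁ ^ 2 = Y₀ * Y₂) := by
  refine ⟨?_, ?_⟩
  · linear_combination
      (-16*X₃^2*u - 3*X₃^2 - 8*X₃*X₁*u - X₃*X₁ + 4*X₃*X₀ - 16*X₃*X₂*v
        + 16*X₁^2*u^2 + 2*X₁^2*u + 64*X₁^2*v + X₁*X₀ - 12*X₁*X₂*v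
        - 16*X₀*X₂*u^2 - 3*X₀*X₂*u - 64*X₀*X₂*v - 4*X₂^2*u*v - X₂^2*v) * h1 +
      (-8*X₃*X₁*u^2 - 2*X₃*X₁*u - 4*X₃*X₀*u + 16*X₃*X₂*u*v + X₁^2*u^2
        + 16*X₁^2*v + 16*X₁*X₀*u^2 + 2*X₁*X₀*u + 64*X₁*X₀*v + 64*X₁*X₂*u^2*v
        + 24*X₁*X₂*u*v + 256*X₁*X₂*v^2 + 16*X₀*X₂*u^3 + 3*X₀*X₂*u^2
        + 64*X₀*X₂*u*v + 64*X₂^2*u^3*v + 32*X₂^2*u^2*v + 256*X₂^2*u*v^2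
        + 4*X₂^2*u*v + 64*X₂^2*v^2) * h2
  · linear_combination
      (16*X₃^2 + 16*X₃*X₁ + 8*X₁^2 + 16*X₁*X₀ + 64*X₁*X₂*v + 16*X₀*X₂*u
        + 64*X₂^2*u*v + 16*X₂^2*v) * h1 +
      (X₁^2 + 8*X₁*X₀ + 32*X₁*X₂*v + 8*X₀*X₂*u + X₀*X₂ + 32*X₂^2*u*v
        + 8*X₂^2*v) * h2
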